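/- Let β = (1+√5)/2, T_β(x) = βx mod 1, and let X be a random variable on [0,1) whose CDF F has no jumps at the endpoints of the intervals I_{n,J}. Then for x ∈ [β^{−1}, 1), the CDF F_n of T_β^n(X) satisfies F_n(x) = ∑_{J=(j_1,...,j_n) ∈ Ω_n} [F(L_{n,J} + (1−j_n) x β^{−n} + j_n β^{−n−1}) − F(L_{n,J})]. -/
import Mathlib

open MeasureTheory Real Filter

/-- The golden ratio. -/
noncomputable def gr : ℝ := (1 + Real.sqrt 5) / 2

/-- Binary strings of length `n` with no two consecutive ones. -/
def Omega (n : ℕ) : Finset (Fin n → Fin 2) :=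
  Finset.univ.filter fun J =>
    ∀ k : Fin n, ∀ h : k.val + 1 < n, (J k : ℕ) * (J ⟨k.val + 1, h⟩ : ℕ) = 0

/-- `L (j_1,…,j_n) = ∑ j_k β^{-k}`. -/
noncomputable def L {n : ℕ} (J : Fin n → Fin 2) : ℝ :=
  ∑ k : Fin n, ((J k : ℕ) : ℝ) * gr ^ (-(k.val + 1 : ℤ))

/-- The last digit `j_n` of a string. -/
def lastD {n : ℕ} (J : Fin n → Fin 2) : ℕ :=
  if h : 0 < n then (J ⟨n - 1, Nat.sub_lt h one_pos⟩ : ℕ) else 0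

/-- The length of `I_{n,J}`. -/
noncomputable def Ilen {n : ℕ} (J : Fin n → Fin 2) : ℝ :=
  (lastD J : ℝ) * gr ^ (-(n + 1 : ℤ)) + (1 - (lastD J : ℝ)) * gr ^ (-(n : ℤ))

/-- The interval `I_{n,J}`. -/
noncomputable def Ival {n : ℕ} (J : Fin n → Fin 2) : Set ℝ :=
  Set.Ico (L J) (L J + Ilen J)

/-- The base-β transformation (β = golden ratio). -/
noncomputable def T (x : ℝ) : ℝ := gr * x - ⌊gr * x⌋

/-- The invariant density. -/
noncomputable def fGold (x : ℝ) : ℝ :=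
  if x < gr⁻¹ then (1 + gr) / Real.sqrt 5 else gr / Real.sqrt 5

/-- The pdf of `T^n X` when `X` has pdf `f`. -/
noncomputable def evolve (n : ℕ) (f : ℝ → ℝ) (x : ℝ) : ℝ :=
  if x < gr⁻¹ then ∑ J ∈ Omega n, gr ^ (-(n : ℤ)) * f (L J + x * gr ^ (-(n : ℤ)))
  else ∑ J ∈ (Omega n).filter (fun J => lastD J = 0),
    gr ^ (-(n : ℤ)) * f (L J + x * gr ^ (-(n : ℤ)))

/-! ### Numeric facts about the golden ratio -/

lemma sqrt5_sq : Real.sqrt 5 ^ 2 = 5 := Real.sq_sqrt (by norm_num)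

lemma sqrt5_nonneg : 0 ≤ Real.sqrt 5 := Real.sqrt_nonneg 5

lemma one_lt_gr : 1 < gr := by
  unfold gr
  nlinarith [sqrt5_sq, sqrt5_nonneg]

lemma gr_pos : 0 < gr := lt_trans one_pos one_lt_gr

lemma gr_lt_two : gr < 2 := by
  unfold gr
  nlinarith [sqrt5_sq, sqrt5_nonneg]

lemma gr_sq : gr ^ 2 = gr + 1 := by
  unfold gr
  linear_combination sqrt5_sq / 4

lemma gr_inv_eq : gr⁻¹ = gr - 1 := by
  have h : (gr - 1) * gr = 1 := by linear_combination gr_sq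
  exact inv_eq_of_mul_eq_one_left h

lemma gr_inv_pos : 0 < gr⁻¹ := inv_pos.mpr gr_pos

lemma gr_inv_lt_one : gr⁻¹ < 1 := by
  rw [gr_inv_eq]; linarith [gr_lt_two]

lemma gr_mul_inv : gr * gr⁻¹ = 1 := mul_inv_cancel₀ (ne_of_gt gr_pos)

lemma gr_inv_sq : gr⁻¹ ^ 2 = 1 - gr⁻¹ := by
  rw [gr_inv_eq]; linear_combination gr_sq

/-! ### Rewriting `L` and `Ilen` with natural powers of `gr⁻¹` -/

lemma gr_zpow_neg (m : ℕ) : gr ^ (-(m : ℤ)) = gr⁻¹ ^ m := by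
  rw [zpow_neg, zpow_natCast, inv_pow]

lemma L_eq {n : ℕ} (J : Fin n → Fin 2) :
    L J = ∑ k : Fin n, ((J k : ℕ) : ℝ) * gr⁻¹ ^ (k.val + 1) := by
  unfold L
  refine Finset.sum_congr rfl fun k _ => ?_
  congr 1
  rw [show (-(k.val + 1 : ℤ)) = -((k.val + 1 : ℕ) : ℤ) by push_cast; ring, gr_zpow_neg]

lemma Ilen_eq {n : ℕ} (J : Fin n → Fin 2) :
    Ilen J = (lastD J : ℝ) * gr⁻¹ ^ (n + 1) + (1 - (lastD J : ℝ)) * gr⁻¹ ^ n := by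
  unfold Ilen
  rw [show (-(n + 1 : ℤ)) = -((n + 1 : ℕ) : ℤ) by push_cast; ring, gr_zpow_neg,
    show (-(n : ℤ)) = -((n : ℕ) : ℤ) by push_cast; ring, gr_zpow_neg]

lemma L_nonneg {n : ℕ} (J : Fin n → Fin 2) : 0 ≤ L J := by
  rw [L_eq]
  refine Finset.sum_nonneg fun k _ => ?_
  exact mul_nonneg (Nat.cast_nonneg _) (pow_nonneg gr_inv_pos.le _)

lemma lastD_le_one {n : ℕ} (J : Fin n → Fin 2) : lastD J ≤ 1 := by
  unfold lastD
  split
  · exact Nat.lt_succ_iff.mp (Fin.is_lt _)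
  · exact Nat.zero_le 1

lemma Ilen_pos {n : ℕ} (J : Fin n → Fin 2) : 0 < Ilen J := by
  rcases Nat.le_one_iff_eq_zero_or_eq_one.mp (lastD_le_one J) with h | h <;>
    rw [Ilen_eq, h]
  · simpa using pow_pos gr_inv_pos n
  · simpa using pow_pos gr_inv_pos (n + 1)

lemma Ilen_le {n : ℕ} (J : Fin n → Fin 2) : Ilen J ≤ gr⁻¹ ^ n := by
  rcases Nat.le_one_iff_eq_zero_or_eq_one.mp (lastD_le_one J) with h | h <;>
    rw [Ilen_eq, h]
  · simp
  · simp only [Nat.cast_one, sub_self, zero_mul, add_zero, one_mul]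
    calc gr⁻¹ ^ (n + 1) = gr⁻¹ ^ n * gr⁻¹ := by ring
    _ ≤ gr⁻¹ ^ n * 1 := by
        have := pow_pos gr_inv_pos n
        nlinarith [gr_inv_lt_one]
    _ = gr⁻¹ ^ n := by ring

/-! ### Cons lemmas -/

lemma L_zero (J : Fin 0 → Fin 2) : L J = 0 := by simp [L]

lemma Ilen_zero (J : Fin 0 → Fin 2) : Ilen J = 1 := by
  simp [Ilen_eq, lastD]

lemma L_cons {n : ℕ} (j : Fin 2) (J : Fin n → Fin 2) :
    L (Fin.cons j J) = (j : ℕ) * gr⁻¹ + gr⁻¹ * L J := by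
  rw [L_eq, L_eq, Fin.sum_univ_succ]
  simp only [Fin.cons_zero, Fin.cons_succ, Fin.val_zero, Fin.val_succ]
  rw [Finset.mul_sum]
  congr 1
  · ring
  · refine Finset.sum_congr rfl fun k _ => ?_
    ring

lemma lastD_cons {n : ℕ} (hn : 0 < n) (j : Fin 2) (J : Fin n → Fin 2) :
    lastD (Fin.cons j J) = lastD J := by
  unfold lastD
  rw [dif_pos (Nat.succ_pos n), dif_pos hn]
  have h1 : n - 1 < n := Nat.sub_lt hn one_pos
  have : (⟨n + 1 - 1, Nat.sub_lt (Nat.succ_pos n) one_pos⟩ : Fin (n + 1)) =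
      Fin.succ ⟨n - 1, h1⟩ := by
    ext
    simp [Fin.val_succ]
    omega
  rw [this, Fin.cons_succ]

lemma Ilen_cons {n : ℕ} (hn : 0 < n) (j : Fin 2) (J : Fin n → Fin 2) :
    Ilen (Fin.cons j J) = gr⁻¹ * Ilen J := by
  rw [Ilen_eq, Ilen_eq, lastD_cons hn]
  ring

lemma L_head_tail {n : ℕ} (J : Fin (n + 1) → Fin 2) :
    L J = (J 0 : ℕ) * gr⁻¹ + gr⁻¹ * L (Fin.tail J) := by
  conv_lhs => rw [← Fin.cons_self_tail J]
  rw [L_cons]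

lemma Ilen_head_tail {n : ℕ} (hn : 0 < n) (J : Fin (n + 1) → Fin 2) :
    Ilen J = gr⁻¹ * Ilen (Fin.tail J) := by
  conv_lhs => rw [← Fin.cons_self_tail J]
  rw [Ilen_cons hn]

lemma lastD_one (J : Fin 1 → Fin 2) : lastD J = (J 0 : ℕ) := by
  unfold lastD
  rw [dif_pos (by norm_num : 0 < 1)]
  rfl

lemma Ilen_one (J : Fin 1 → Fin 2) :
    Ilen J = (J 0 : ℕ) * gr⁻¹ ^ 2 + (1 - (J 0 : ℕ)) * gr⁻¹ := by
  rw [Ilen_eq, lastD_one]; ring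

/-! ### Omega lemmas -/

lemma mem_Omega {n : ℕ} (J : Fin n → Fin 2) :
    J ∈ Omega n ↔ ∀ k : Fin n, ∀ h : k.val + 1 < n,
      (J k : ℕ) * (J ⟨k.val + 1, h⟩ : ℕ) = 0 := by
  simp [Omega]

lemma tail_mem_Omega {n : ℕ} {J : Fin (n + 1) → Fin 2} (hJ : J ∈ Omega (n + 1)) :
    Fin.tail J ∈ Omega n := by
  rw [mem_Omega] at hJ ⊢
  intro k h
  have h' : (k.succ).val + 1 < n + 1 := by simp [Fin.val_succ]; omega
  have := hJ k.succ h'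
  have e : (⟨(k.succ).val + 1, h'⟩ : Fin (n + 1)) = Fin.succ ⟨k.val + 1, h⟩ := by
    ext; simp [Fin.val_succ]
  rw [e] at this
  simpa [Fin.tail] using this

lemma head_zero_of_one {n : ℕ} {J : Fin (n + 1) → Fin 2} (hJ : J ∈ Omega (n + 1))
    (hn : 0 < n) (h1 : (J 0 : ℕ) = 1) : (Fin.tail J ⟨0, hn⟩ : ℕ) = 0 := by
  rw [mem_Omega] at hJ
  have h' : (0 : Fin (n + 1)).val + 1 < n + 1 := by simp; omega
  have := hJ 0 h'
  rw [h1, one_mul] at this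
  have e : (⟨(0 : Fin (n + 1)).val + 1, h'⟩ : Fin (n + 1)) = Fin.succ ⟨0, hn⟩ := by
    ext; simp
  rw [e] at this
  simpa [Fin.tail] using this

lemma cons_mem_Omega {n : ℕ} {j : Fin 2} {J : Fin n → Fin 2} (hJ : J ∈ Omega n)
    (hhead : ∀ h : 0 < n, (j : ℕ) * (J ⟨0, h⟩ : ℕ) = 0) :
    Fin.cons j J ∈ Omega (n + 1) := by
  rw [mem_Omega] at hJ ⊢
  intro k
  refine Fin.cases ?_ ?_ k
  · intro h
    have hn : 0 < n := by simpa using h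
    have e : (⟨(0 : Fin (n + 1)).val + 1, h⟩ : Fin (n + 1)) = Fin.succ ⟨0, hn⟩ := by
      ext; simp
    rw [e, Fin.cons_zero, Fin.cons_succ]
    exact hhead hn
  · intro i h
    have h' : i.val + 1 < n := by simpa [Fin.val_succ] using h
    have e : (⟨(i.succ).val + 1, h⟩ : Fin (n + 1)) = Fin.succ ⟨i.val + 1, h'⟩ := by
      ext; simp [Fin.val_succ]
    rw [e, Fin.cons_succ, Fin.cons_succ]
    exact hJ i h'

/-! ### Range lemma -/

lemma range_lemma : ∀ n : ℕ, ∀ J ∈ Omega n,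
    L J + Ilen J ≤ 1 ∧ (∀ h : 0 < n, (J ⟨0, h⟩ : ℕ) = 0 → L J + Ilen J ≤ gr⁻¹) := by
  intro n
  induction n with
  | zero =>
    intro J _
    rw [L_zero, Ilen_zero]
    exact ⟨by norm_num, fun h => absurd h (by omega)⟩
  | succ n ih =>
    intro J hJ
    have hJt : Fin.tail J ∈ Omega n := tail_mem_Omega hJ
    have hcons : Fin.cons (J 0) (Fin.tail J) = J := Fin.cons_self_tail J
    rcases Nat.eq_zero_or_pos n with hn | hn
    · -- n = 0 : length-1 strings, direct computation
      subst hn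
      have hL : L J = (J 0 : ℕ) * gr⁻¹ := by
        rw [L_head_tail, L_zero]; ring
      have hIlen : Ilen J = (J 0 : ℕ) * gr⁻¹ ^ 2 + (1 - (J 0 : ℕ)) * gr⁻¹ := Ilen_one J
      constructor
      · rw [hL, hIlen, gr_inv_sq]
        have : (J 0 : ℕ) ≤ 1 := by omega
        have h01 : ((J 0 : ℕ) : ℝ) ≤ 1 := by exact_mod_cast this
        nlinarith [gr_inv_lt_one, gr_inv_pos]
      · intro h h0
        have h0' : J ⟨0, h⟩ = J 0 := rfl
        rw [h0' ] at h0  -- unused; just ensure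
        rw [hL, hIlen]
        rw [show ((J 0 : ℕ) : ℝ) = 0 by exact_mod_cast h0]
        norm_num
    · -- n > 0
      have hLc : L J = (J 0 : ℕ) * gr⁻¹ + gr⁻¹ * L (Fin.tail J) := L_head_tail J
      have hIc : Ilen J = gr⁻¹ * Ilen (Fin.tail J) := Ilen_head_tail hn J
      obtain ⟨ih1, ih2⟩ := ih (Fin.tail J) hJt
      have hjcase : (J 0 : ℕ) = 0 ∨ (J 0 : ℕ) = 1 := by omega
      constructor
      · rcases hjcase with h0 | h1
        · rw [hLc, hIc, h0]
          push_cast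
          nlinarith [gr_inv_pos, gr_inv_lt_one]
        · have htail0 := head_zero_of_one hJ hn h1
          have := ih2 hn htail0
          rw [hLc, hIc, h1]
          push_cast
          nlinarith [gr_inv_pos, gr_inv_sq]
      · intro h h0
        have h0' : (J 0 : ℕ) = 0 := h0
        rw [hLc, hIc, h0']
        push_cast
        nlinarith [gr_inv_pos, gr_inv_lt_one]

lemma Ival_subset_unit {n : ℕ} {J : Fin n → Fin 2} (hJ : J ∈ Omega n) :
    L J + Ilen J ≤ 1 := (range_lemma n J hJ).1

/-! ### Floor computations for T -/

lemma T_of_mem_Ico0 {y : ℝ} (h0 : 0 ≤ gr * y) (h1 : gr * y < 1) : T y = gr * y := by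
  unfold T
  rw [Int.floor_eq_zero_iff.mpr ⟨h0, h1⟩]
  simp

lemma T_of_mem_Ico1 {y : ℝ} (h0 : 1 ≤ gr * y) (h1 : gr * y < 2) : T y = gr * y - 1 := by
  unfold T
  have : ⌊gr * y⌋ = 1 := by
    rw [Int.floor_eq_iff]
    constructor
    · exact_mod_cast h0
    · push_cast
      linarith
  rw [this]
  norm_num

/-! ### Dynamics lemma -/

lemma dynamics : ∀ n : ℕ, ∀ J ∈ Omega n, ∀ y ∈ Set.Ico (L J) (L J + Ilen J),
    T^[n] y = gr ^ n * (y - L J) := by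
  intro n
  induction n with
  | zero =>
    intro J _ y _
    rw [L_zero]
    simp
  | succ n ih =>
    intro J hJ y hy
    obtain ⟨hy1, hy2⟩ := hy
    have hJt : Fin.tail J ∈ Omega n := tail_mem_Omega hJ
    have hcons : Fin.cons (J 0) (Fin.tail J) = J := Fin.cons_self_tail J
    have hLt0 : 0 ≤ L (Fin.tail J) := L_nonneg _
    have hIt1 : L (Fin.tail J) + Ilen (Fin.tail J) ≤ 1 := Ival_subset_unit hJt
    rcases Nat.eq_zero_or_pos n with hn | hn
    · -- length 1
      subst hn
      have hL : L J = (J 0 : ℕ) * gr⁻¹ := by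
        rw [L_head_tail, L_zero]; ring
      have hIlen : Ilen J = (J 0 : ℕ) * gr⁻¹ ^ 2 + (1 - (J 0 : ℕ)) * gr⁻¹ := Ilen_one J
      have hjcase : (J 0 : ℕ) = 0 ∨ (J 0 : ℕ) = 1 := by omega
      have hβγ : gr * gr⁻¹ = 1 := gr_mul_inv
      rcases hjcase with h0 | h1
      · rw [hL, h0] at hy1
        rw [hL, hIlen, h0] at hy2
        rw [hL, h0]
        push_cast at hy1 hy2 ⊢
        have hTy : T y = gr * y := by
          apply T_of_mem_Ico0
          · nlinarith [gr_pos]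
          · nlinarith [gr_pos]
        simp only [Function.iterate_one, hTy, pow_one]
        ring
      · rw [hL, h1] at hy1
        rw [hL, hIlen, h1] at hy2
        rw [hL, h1]
        push_cast at hy1 hy2 ⊢
        have hTy : T y = gr * y - 1 := by
          apply T_of_mem_Ico1
          · nlinarith [gr_pos]
          · nlinarith [gr_pos, gr_inv_sq, gr_inv_pos, gr_lt_two]
        simp only [Function.iterate_one, hTy, pow_one]
        nlinarith [gr_pos]
    · -- n > 0
      have hLc : L J = (J 0 : ℕ) * gr⁻¹ + gr⁻¹ * L (Fin.tail J) := L_head_tail J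
      have hIc : Ilen J = gr⁻¹ * Ilen (Fin.tail J) := Ilen_head_tail hn J
      have hβγ : gr * gr⁻¹ = 1 := gr_mul_inv
      have hjcase : (J 0 : ℕ) = 0 ∨ (J 0 : ℕ) = 1 := by omega
      rw [Function.iterate_succ_apply]
      rcases hjcase with h0 | h1
      · rw [hLc, h0] at hy1
        rw [hLc, hIc, h0] at hy2
        rw [hLc, h0]
        push_cast at hy1 hy2 ⊢
        have hmem : gr * y ∈ Set.Ico (L (Fin.tail J)) (L (Fin.tail J) + Ilen (Fin.tail J)) := by
          constructor
          · nlinarith [gr_pos]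
          · nlinarith [gr_pos]
        have hTy : T y = gr * y := by
          apply T_of_mem_Ico0
          · nlinarith [gr_pos]
          · have := hmem.2; nlinarith [gr_pos]
        rw [hTy, ih (Fin.tail J) hJt (gr * y) hmem]
        have hgg : gr ^ (n + 1) * gr⁻¹ = gr ^ n := by
          rw [pow_succ, mul_assoc, hβγ, mul_one]
        linear_combination (L (Fin.tail J)) * hgg
      · rw [hLc, h1] at hy1
        rw [hLc, hIc, h1] at hy2
        rw [hLc, h1]
        push_cast at hy1 hy2 ⊢
        have hmem : gr * y - 1 ∈ Set.Ico (L (Fin.tail J)) (L (Fin.tail J) + Ilen (Fin.tail J)) := by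
          constructor
          · nlinarith [gr_pos]
          · nlinarith [gr_pos]
        have hTy : T y = gr * y - 1 := by
          apply T_of_mem_Ico1
          · nlinarith [gr_pos]
          · have := hmem.2; nlinarith [gr_pos]
        rw [hTy, ih (Fin.tail J) hJt (gr * y - 1) hmem]
        have hgg : gr ^ (n + 1) * gr⁻¹ = gr ^ n := by
          rw [pow_succ, mul_assoc, hβγ, mul_one]
        linear_combination (1 + L (Fin.tail J)) * hgg

/-! ### Cover lemma -/

lemma cover : ∀ n : ℕ, ∀ y ∈ Set.Ico (0 : ℝ) 1,
    ∃ J ∈ Omega n, y ∈ Set.Ico (L J) (L J + Ilen J) := by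
  intro n
  induction n with
  | zero =>
    intro y hy
    refine ⟨Fin.elim0, by rw [mem_Omega]; intro k; exact k.elim0, ?_⟩
    rw [L_zero, Ilen_zero]
    simpa using hy
  | succ n ih =>
    intro y hy
    obtain ⟨hy1, hy2⟩ := hy
    have hβγ : gr * gr⁻¹ = 1 := gr_mul_inv
    rcases lt_or_ge y gr⁻¹ with hlt | hge
    · -- first digit 0
      have hz : gr * y ∈ Set.Ico (0 : ℝ) 1 := by
        constructor
        · nlinarith [gr_pos]
        · nlinarith [gr_pos]
      obtain ⟨J', hJ', hm⟩ := ih (gr * y) hz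
      refine ⟨Fin.cons 0 J', cons_mem_Omega hJ' (fun h => by simp), ?_⟩
      rcases Nat.eq_zero_or_pos n with hn | hn
      · subst hn
        have hL : L (Fin.cons (0 : Fin 2) J') = 0 := by
          rw [L_cons, L_zero]; simp
        have hIlen : Ilen (Fin.cons (0 : Fin 2) J') = gr⁻¹ := by
          rw [Ilen_one]; simp
        rw [hL, hIlen]
        exact ⟨by linarith, by linarith⟩
      · rw [L_cons, Ilen_cons hn]
        push_cast
        obtain ⟨hm1, hm2⟩ := hm
        have hyy : gr⁻¹ * (gr * y) = y := by
          rw [← mul_assoc, mul_comm gr⁻¹ gr, hβγ, one_mul]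
        have hlo := mul_le_mul_of_nonneg_left hm1 gr_inv_pos.le
        have hhi := mul_lt_mul_of_pos_left hm2 gr_inv_pos
        rw [hyy] at hlo hhi
        simp only [Fin.val_zero, Nat.cast_zero]
        constructor
        · linarith
        · rw [mul_add] at hhi; linarith
    · -- first digit 1
      have hz : gr * y - 1 ∈ Set.Ico (0 : ℝ) 1 := by
        constructor
        · nlinarith [gr_pos]
        · nlinarith [gr_pos, gr_inv_sq, gr_inv_pos]
      rcases Nat.eq_zero_or_pos n with hn | hn
      · subst hn
        refine ⟨Fin.cons 1 Fin.elim0, by rw [mem_Omega]; intro k h; omega, ?_⟩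
        have hL : L (Fin.cons (1 : Fin 2) Fin.elim0) = gr⁻¹ := by
          rw [L_cons, L_zero]; norm_num
        have hIlen : Ilen (Fin.cons (1 : Fin 2) Fin.elim0) = gr⁻¹ ^ 2 := by
          rw [Ilen_one]; norm_num
        rw [hL, hIlen, gr_inv_sq]
        exact ⟨hge, by linarith⟩
      · -- n > 0 : need z < gr⁻¹ so that chosen J' has first digit 0
        have hzlt : gr * y - 1 < gr⁻¹ := by
          nlinarith [gr_pos, gr_inv_sq, gr_inv_pos]
        obtain ⟨J', hJ', hm⟩ := ih (gr * y - 1) hz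
        have hfirst : (J' ⟨0, hn⟩ : ℕ) = 0 := by
          by_contra hne
          have h1 : (J' ⟨0, hn⟩ : ℕ) = 1 := by omega
          -- then L J' ≥ gr⁻¹
          have hterm : gr⁻¹ ≤ L J' := by
            rw [L_eq]
            have := Finset.single_le_sum (f := fun k : Fin n =>
              ((J' k : ℕ) : ℝ) * gr⁻¹ ^ (k.val + 1))
              (fun k _ => mul_nonneg (Nat.cast_nonneg _) (pow_nonneg gr_inv_pos.le _))
              (Finset.mem_univ ⟨0, hn⟩)
            simpa [h1] using this
          have := hm.1
          linarith
        refine ⟨Fin.cons 1 J', cons_mem_Omega hJ' (fun h => by simp [hfirst]), ?_⟩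
        rw [L_cons, Ilen_cons hn]
        push_cast
        obtain ⟨hm1, hm2⟩ := hm
        have hyy : gr⁻¹ * (gr * y) = y := by
          rw [← mul_assoc, mul_comm gr⁻¹ gr, hβγ, one_mul]
        have hlo := mul_le_mul_of_nonneg_left hm1 gr_inv_pos.le
        have hhi := mul_lt_mul_of_pos_left hm2 gr_inv_pos
        rw [mul_sub, hyy, mul_one] at hlo hhi
        simp only [Fin.val_one, Nat.cast_one]
        rw [mul_add] at hhi
        constructor
        · linarith
        · linarith

/-! ### Disjointness lemma -/

lemma Ival_disjoint : ∀ n : ℕ, ∀ J ∈ Omega n, ∀ K ∈ Omega n, J ≠ K →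
    Disjoint (Set.Ico (L J) (L J + Ilen J)) (Set.Ico (L K) (L K + Ilen K)) := by
  intro n
  induction n with
  | zero =>
    intro J _ K _ hJK
    exact absurd (funext fun k => k.elim0) hJK
  | succ n ih =>
    intro J hJ K hK hJK
    have hJt : Fin.tail J ∈ Omega n := tail_mem_Omega hJ
    have hKt : Fin.tail K ∈ Omega n := tail_mem_Omega hK
    have hconsJ : Fin.cons (J 0) (Fin.tail J) = J := Fin.cons_self_tail J
    have hconsK : Fin.cons (K 0) (Fin.tail K) = K := Fin.cons_self_tail K
    have hβγ : gr * gr⁻¹ = 1 := gr_mul_inv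
    -- helper: disjointness from separation
    by_cases hhead : J 0 = K 0
    · -- same head, distinct tails
      have htne : Fin.tail J ≠ Fin.tail K := by
        intro he
        apply hJK
        rw [← hconsJ, ← hconsK, hhead, he]
      rcases Nat.eq_zero_or_pos n with hn | hn
      · subst hn
        exact absurd (funext fun k => k.elim0) htne
      have hd := ih (Fin.tail J) hJt (Fin.tail K) hKt htne
      rw [Set.disjoint_left] at hd ⊢
      intro y hyJ hyK
      have hLJ : L J = (J 0 : ℕ) * gr⁻¹ + gr⁻¹ * L (Fin.tail J) := L_head_tail J
      have hIJ : Ilen J = gr⁻¹ * Ilen (Fin.tail J) := Ilen_head_tail hn J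
      have hLK : L K = (K 0 : ℕ) * gr⁻¹ + gr⁻¹ * L (Fin.tail K) := L_head_tail K
      have hIK : Ilen K = gr⁻¹ * Ilen (Fin.tail K) := Ilen_head_tail hn K
      set z := gr * (y - (J 0 : ℕ) * gr⁻¹) with hz
      have hzJ : z ∈ Set.Ico (L (Fin.tail J)) (L (Fin.tail J) + Ilen (Fin.tail J)) := by
        obtain ⟨h1, h2⟩ := hyJ
        rw [hLJ] at h1
        rw [hLJ, hIJ] at h2
        constructor
        · have h := mul_le_mul_of_nonneg_left
            (show gr⁻¹ * L (Fin.tail J) ≤ y - (J 0 : ℕ) * gr⁻¹ by linarith) gr_pos.le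
          rw [← mul_assoc, hβγ, one_mul] at h
          exact h
        · have h := mul_lt_mul_of_pos_left
            (show y - (J 0 : ℕ) * gr⁻¹ < gr⁻¹ * (L (Fin.tail J) + Ilen (Fin.tail J)) by
              rw [mul_add]; linarith) gr_pos
          rw [← mul_assoc, hβγ, one_mul] at h
          exact h
      have hzK : z ∈ Set.Ico (L (Fin.tail K)) (L (Fin.tail K) + Ilen (Fin.tail K)) := by
        obtain ⟨h1, h2⟩ := hyK
        rw [hLK] at h1
        rw [hLK, hIK] at h2
        rw [hz, hhead]
        constructor
        · have h := mul_le_mul_of_nonneg_left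
            (show gr⁻¹ * L (Fin.tail K) ≤ y - (K 0 : ℕ) * gr⁻¹ by linarith) gr_pos.le
          rw [← mul_assoc, hβγ, one_mul] at h
          exact h
        · have h := mul_lt_mul_of_pos_left
            (show y - (K 0 : ℕ) * gr⁻¹ < gr⁻¹ * (L (Fin.tail K) + Ilen (Fin.tail K)) by
              rw [mul_add]; linarith) gr_pos
          rw [← mul_assoc, hβγ, one_mul] at h
          exact h
      exact hd hzJ hzK
    · -- different heads
      -- WLOG one is 0, other is 1
      have key : ∀ A B : Fin (n+1) → Fin 2, A ∈ Omega (n+1) → B ∈ Omega (n+1) →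
          (A 0 : ℕ) = 0 → (B 0 : ℕ) = 1 →
          Disjoint (Set.Ico (L A) (L A + Ilen A)) (Set.Ico (L B) (L B + Ilen B)) := by
        intro A B hA hB hA0 hB1
        have hAle : L A + Ilen A ≤ gr⁻¹ := by
          have := (range_lemma (n+1) A hA).2 (Nat.succ_pos n)
          exact this (by exact hA0)
        have hBge : gr⁻¹ ≤ L B := by
          rw [L_eq]
          have := Finset.single_le_sum (f := fun k : Fin (n+1) =>
            ((B k : ℕ) : ℝ) * gr⁻¹ ^ (k.val + 1))
            (fun k _ => mul_nonneg (Nat.cast_nonneg _) (pow_nonneg gr_inv_pos.le _))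
            (Finset.mem_univ 0)
          simpa [hB1] using this
        rw [Set.disjoint_left]
        intro y hyA hyB
        have := hyA.2
        have := hyB.1
        linarith
      have hJ0 : (J 0 : ℕ) = 0 ∨ (J 0 : ℕ) = 1 := by omega
      have hK0 : (K 0 : ℕ) = 0 ∨ (K 0 : ℕ) = 1 := by omega
      have hne : (J 0 : ℕ) ≠ (K 0 : ℕ) := by
        intro he
        exact hhead (Fin.ext (by omega))
      rcases hJ0 with h | h <;> rcases hK0 with h' | h'
      · omega
      · exact key J K hJ hK h h'
      · exact (key K J hK hJ h' h).symm
      · omega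

/-! ### Measure helper lemmas -/

lemma meas_union_null_left {Ω : Type*} [MeasureSpace Ω] {A B : Set Ω}
    (h : volume A = 0) : volume (A ∪ B) = volume B := by
  refine le_antisymm ?_ (measure_mono Set.subset_union_right)
  calc volume (A ∪ B) ≤ volume A + volume B := measure_union_le A B
  _ = volume B := by rw [h, zero_add]

section MeasureLemmas

variable {Ω : Type*} [MeasureSpace Ω] [IsProbabilityMeasure (volume : Measure Ω)]

lemma meas_Ioc (X : Ω → ℝ) (hX : Measurable X) (a b : ℝ) (hab : a ≤ b) :
    (volume (X ⁻¹' Set.Ioc a b)).toReal =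
      (volume (X ⁻¹' Set.Iic b)).toReal - (volume (X ⁻¹' Set.Iic a)).toReal := by
  have hu : X ⁻¹' Set.Iic b = X ⁻¹' Set.Iic a ∪ X ⁻¹' Set.Ioc a b := by
    rw [← Set.preimage_union, Set.Iic_union_Ioc_eq_Iic hab]
  have hd : Disjoint (X ⁻¹' Set.Iic a) (X ⁻¹' Set.Ioc a b) :=
    Disjoint.preimage X (Set.Iic_disjoint_Ioc le_rfl)
  rw [hu, measure_union hd (hX measurableSet_Ioc),
    ENNReal.toReal_add (measure_ne_top _ _) (measure_ne_top _ _)]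
  ring

lemma meas_Icc (X : Ω → ℝ) (hX : Measurable X) (a b : ℝ) (hab : a ≤ b)
    (h0 : volume {ω | X ω = a} = 0) :
    (volume (X ⁻¹' Set.Icc a b)).toReal =
      (volume (X ⁻¹' Set.Iic b)).toReal - (volume (X ⁻¹' Set.Iic a)).toReal := by
  have he : X ⁻¹' Set.Icc a b = X ⁻¹' {a} ∪ X ⁻¹' Set.Ioc a b := by
    rw [← Set.preimage_union, ← Set.insert_eq, Set.Ioc_insert_left hab]
  have h0' : volume (X ⁻¹' {a}) = 0 := h0
  rw [he, meas_union_null_left h0', meas_Ioc X hX a b hab]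

lemma meas_Ico (X : Ω → ℝ) (hX : Measurable X) (a b : ℝ) (hab : a < b)
    (h0 : volume {ω | X ω = a} = 0) (h1 : volume {ω | X ω = b} = 0) :
    (volume (X ⁻¹' Set.Ico a b)).toReal =
      (volume (X ⁻¹' Set.Iic b)).toReal - (volume (X ⁻¹' Set.Iic a)).toReal := by
  have he : X ⁻¹' Set.Ico a b = X ⁻¹' {a} ∪ X ⁻¹' Set.Ioo a b := by
    rw [← Set.preimage_union, ← Set.insert_eq, Set.Ioo_insert_left hab]
  have he2 : X ⁻¹' Set.Ioc a b = X ⁻¹' {b} ∪ X ⁻¹' Set.Ioo a b := by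
    rw [← Set.preimage_union, ← Set.insert_eq, Set.Ioo_insert_right hab]
  have h0' : volume (X ⁻¹' {a}) = 0 := h0
  have h1' : volume (X ⁻¹' {b}) = 0 := h1
  rw [he, meas_union_null_left h0', show volume (X ⁻¹' Set.Ioo a b) =
      volume (X ⁻¹' Set.Ioc a b) by rw [he2, meas_union_null_left h1'],
    meas_Ioc X hX a b hab.le]

end MeasureLemmas

/-! ### Main theorem -/

theorem cdf_remainder_high {Ω : Type*} [MeasureSpace Ω]
    [IsProbabilityMeasure (volume : Measure Ω)]
    (X : Ω → ℝ) (hX : Measurable X) (hX01 : ∀ ω, X ω ∈ Set.Ico (0 : ℝ) 1)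
    (n : ℕ) (hn : 0 < n)
    (hnojump : ∀ J ∈ Omega n, volume {ω | X ω = L J} = 0 ∧
      volume {ω | X ω = L J + Ilen J} = 0) :
    ∀ x ∈ Set.Ico gr⁻¹ (1 : ℝ),
      (volume {ω | T^[n] (X ω) ≤ x}).toReal =
        ∑ J ∈ Omega n,
          ((volume {ω | X ω ≤ L J + (1 - (lastD J : ℝ)) * x * gr ^ (-(n : ℤ))
              + (lastD J : ℝ) * gr ^ (-(n + 1 : ℤ))}).toReal
            - (volume {ω | X ω ≤ L J}).toReal) := by
  intro x hx
  obtain ⟨hx1, hx2⟩ := hx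
  have hβγ : gr * gr⁻¹ = 1 := gr_mul_inv
  have hγn : (0:ℝ) < gr⁻¹ ^ n := pow_pos gr_inv_pos n
  have hgn : (0:ℝ) < gr ^ n := pow_pos gr_pos n
  have hprod : gr ^ n * gr⁻¹ ^ n = 1 := by
    rw [← mul_pow, hβγ, one_pow]
  -- the pieces
  set A : (Fin n → Fin 2) → Set Ω := fun J =>
    X ⁻¹' (Set.Ico (L J) (L J + Ilen J) ∩ Set.Iic (L J + x * gr⁻¹ ^ n)) with hA
  have hset : {ω | T^[n] (X ω) ≤ x} = ⋃ J ∈ Omega n, A J := by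
    ext ω
    simp only [Set.mem_setOf_eq, Set.mem_iUnion, exists_prop]
    constructor
    · intro h
      obtain ⟨J, hJ, hm⟩ := cover n (X ω) (hX01 ω)
      refine ⟨J, hJ, ?_⟩
      rw [hA]
      refine ⟨hm, ?_⟩
      have hdyn := dynamics n J hJ (X ω) hm
      rw [hdyn] at h
      have h2 : gr⁻¹ ^ n * (gr ^ n * (X ω - L J)) ≤ gr⁻¹ ^ n * x :=
        mul_le_mul_of_nonneg_left h hγn.le
      rw [← mul_assoc, mul_comm (gr⁻¹ ^ n) (gr ^ n), hprod, one_mul] at h2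
      simp only [Set.mem_Iic]
      linarith
    · rintro ⟨J, hJ, hm⟩
      rw [hA] at hm
      obtain ⟨hm1, hm2⟩ := hm
      have hdyn := dynamics n J hJ (X ω) hm1
      rw [hdyn]
      simp only [Set.mem_Iic] at hm2
      calc gr ^ n * (X ω - L J) ≤ gr ^ n * (x * gr⁻¹ ^ n) := by
            apply mul_le_mul_of_nonneg_left _ hgn.le
            linarith
      _ = x := by rw [← mul_assoc, mul_comm (gr ^ n) x, mul_assoc, hprod, mul_one]
  have hmeas : ∀ J ∈ Omega n, MeasurableSet (A J) :=
    fun J _ => hX (MeasurableSet.inter measurableSet_Ico measurableSet_Iic)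
  have hdisj : Set.PairwiseDisjoint (↑(Omega n) : Set (Fin n → Fin 2)) A := by
    intro J hJ K hK hJK
    have := Ival_disjoint n J (by exact_mod_cast hJ) K (by exact_mod_cast hK) hJK
    exact Disjoint.preimage X
      ((this.mono Set.inter_subset_left Set.inter_subset_left))
  rw [hset, measure_biUnion_finset hdisj hmeas,
    ENNReal.toReal_sum (fun J _ => measure_ne_top _ _)]
  refine Finset.sum_congr rfl fun J hJ => ?_
  obtain ⟨hnj1, hnj2⟩ := hnojump J hJ
  have hd01 : lastD J = 0 ∨ lastD J = 1 := by
    have := lastD_le_one J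
    omega
  have hzn : gr ^ (-(n : ℤ)) = gr⁻¹ ^ n := gr_zpow_neg n
  have hzn1 : gr ^ (-(n + 1 : ℤ)) = gr⁻¹ ^ (n + 1) := by
    rw [show (-(n + 1 : ℤ)) = -((n + 1 : ℕ) : ℤ) by push_cast; ring, gr_zpow_neg]
  rcases hd01 with hd | hd
  · -- lastD J = 0 : Ilen J = gr⁻¹ ^ n, cutoff = L J + x * gr⁻¹ ^ n
    have hIlen : Ilen J = gr⁻¹ ^ n := by
      rw [Ilen_eq, hd]; push_cast; ring
    have hAeq : A J = X ⁻¹' Set.Icc (L J) (L J + x * gr⁻¹ ^ n) := by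
      rw [hA]
      ext ω
      simp only [Set.mem_preimage, Set.mem_inter_iff, Set.mem_Ico, Set.mem_Iic,
        Set.mem_Icc, hIlen]
      constructor
      · rintro ⟨⟨h1, _⟩, h3⟩
        exact ⟨h1, h3⟩
      · rintro ⟨h1, h2⟩
        refine ⟨⟨h1, ?_⟩, h2⟩
        nlinarith
    have hcut : L J + (1 - (lastD J : ℝ)) * x * gr ^ (-(n : ℤ))
        + (lastD J : ℝ) * gr ^ (-(n + 1 : ℤ)) = L J + x * gr⁻¹ ^ n := by
      rw [hd, hzn, hzn1]; push_cast; ring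
    rw [hAeq, hcut]
    have hab : L J ≤ L J + x * gr⁻¹ ^ n := by nlinarith [gr_inv_pos]
    have := meas_Icc X hX (L J) (L J + x * gr⁻¹ ^ n) hab hnj1
    rw [this]
    rfl
  · -- lastD J = 1 : Ilen J = gr⁻¹ ^ (n+1), cutoff = L J + Ilen J
    have hIlen : Ilen J = gr⁻¹ ^ (n + 1) := by
      rw [Ilen_eq, hd]; push_cast; ring
    have hIle : Ilen J ≤ x * gr⁻¹ ^ n := by
      rw [hIlen, pow_succ]
      calc gr⁻¹ ^ n * gr⁻¹ = gr⁻¹ * gr⁻¹ ^ n := by ring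
      _ ≤ x * gr⁻¹ ^ n := by nlinarith
    have hAeq : A J = X ⁻¹' Set.Ico (L J) (L J + Ilen J) := by
      rw [hA]
      ext ω
      simp only [Set.mem_preimage, Set.mem_inter_iff, Set.mem_Ico, Set.mem_Iic]
      constructor
      · rintro ⟨h1, _⟩
        exact h1
      · rintro ⟨h1, h2⟩
        exact ⟨⟨h1, h2⟩, by linarith⟩
    have hcut : L J + (1 - (lastD J : ℝ)) * x * gr ^ (-(n : ℤ))
        + (lastD J : ℝ) * gr ^ (-(n + 1 : ℤ)) = L J + Ilen J := by
      rw [hd, hzn, hzn1, hIlen]; push_cast; ring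
    rw [hAeq, hcut]
    have hab : L J < L J + Ilen J := by linarith [Ilen_pos J]
    have := meas_Ico X hX (L J) (L J + Ilen J) hab hnj1 hnj2
    rw [this]
    rfl
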